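/- Let G be a locally compact Hausdorff groupoid with s : G → G⁰ a local homeomorphism. Fix α ∈ G with r(α)·G·s(α) = {α} (α is the unique arrow from s(α) to r(α)), and let V be a precompact neighbourhood of α. Then there exist neighbourhoods X of r(α) and Y of s(α) in G⁰ such that XVY = {γ ∈ V : r(γ) ∈ X, s(γ) ∈ Y} is a precompact open bisection. -/

import Mathlib

open scoped BigOperators

structure EtaleGroupoid (G : Type*) [TopologicalSpace G] where
  r : G → G
  s : G → G
  mul : G → G → G
  inv : G → G
  mul_assoc' : ∀ a b c, s a = r b → s b = r c → mul (mul a b) c = mul a (mul b c)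
  r_mul : ∀ a b, s a = r b → r (mul a b) = r a
  s_mul : ∀ a b, s a = r b → s (mul a b) = s b
  unit_mul : ∀ a, mul (r a) a = a
  mul_unit : ∀ a, mul a (s a) = a
  inv_inv : ∀ a, inv (inv a) = a
  r_inv : ∀ a, r (inv a) = s a
  s_inv : ∀ a, s (inv a) = r a
  mul_inv : ∀ a, mul a (inv a) = r a
  inv_mul : ∀ a, mul (inv a) a = s a
  continuous_r : Continuous r
  continuous_s : Continuous s
  continuous_inv : Continuous inv
  continuous_mul : ContinuousOn (fun p : G × G => mul p.1 p.2) {p : G × G | s p.1 = r p.2}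

namespace EtaleGroupoid

variable {G : Type*} [TopologicalSpace G] (g : EtaleGroupoid G)

/-- The unit space `G⁰`. -/
def unitSpace : Set G := Set.range g.r

/-- A bisection: a subset on which both `r` and `s` are injective. -/
def IsBisection (U : Set G) : Prop := Set.InjOn g.r U ∧ Set.InjOn g.s U

/-- The set-product `UV` of two subsets of `G`. -/
def setMul (U V : Set G) : Set G :=
  {x | ∃ a ∈ U, ∃ b ∈ V, g.s a = g.r b ∧ x = g.mul a b}

/-- The source map is a local homeomorphism (onto its open image). -/
def SourceEtale : Prop :=
  ∀ a : G, ∃ U : Set G, IsOpen U ∧ a ∈ U ∧ Set.InjOn g.s U ∧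
    ∀ V : Set G, V ⊆ U → IsOpen V → IsOpen (g.s '' V)

/-- The unit space is totally disconnected: it has a basis of compact open sets. -/
def UnitBasis : Prop :=
  ∀ u ∈ g.unitSpace, ∀ V : Set G, IsOpen V → u ∈ V →
    ∃ W : Set G, IsCompact W ∧ IsOpen W ∧ u ∈ W ∧ W ⊆ V ∧ W ⊆ g.unitSpace

/-- Convolution of complex functions on `G`. -/
noncomputable def conv (f h : G → ℂ) : G → ℂ :=
  fun γ => ∑ᶠ α ∈ {α : G | g.r α = g.r γ}, f α * h (g.mul (g.inv α) γ)

/-- The involution `f*(γ) = conj (f (γ⁻¹))`. -/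
noncomputable def star' (f : G → ℂ) : G → ℂ := fun γ => (starRingEnd ℂ) (f (g.inv γ))

/-- Indicator function of a set. -/
noncomputable def ind (U : Set G) : G → ℂ := Set.indicator U 1

/-- `c : G → Γ` is a cocycle. -/
def IsCocycle {Γ : Type*} [Group Γ] (c : G → Γ) : Prop :=
  ∀ a b, g.s a = g.r b → c (g.mul a b) = c a * c b

/-- The `n`-graded compact open bisections. -/
def BcoGr {Γ : Type*} (c : G → Γ) (n : Γ) : Set (Set G) :=
  {U | IsCompact U ∧ IsOpen U ∧ g.IsBisection U ∧ ∀ x ∈ U, c x = n}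

/-- All graded compact open bisections. -/
def Bco {Γ : Type*} (c : G → Γ) : Set (Set G) := ⋃ n, g.BcoGr c n

/-- `A(G)`: the locally constant, compactly supported complex functions, as a
submodule of `G → ℂ`. -/
noncomputable def AG : Submodule ℂ (G → ℂ) where
  carrier := {f | IsLocallyConstant f ∧ HasCompactSupport f}
  add_mem' := by
    rintro f h ⟨hf1, hf2⟩ ⟨hh1, hh2⟩
    exact ⟨hf1.comp₂ hh1 (· + ·), hf2.add hh2⟩
  zero_mem' := ⟨IsLocallyConstant.const 0, by
    simp [HasCompactSupport, tsupport]⟩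
  smul_mem' := by
    rintro a f ⟨hf1, hf2⟩
    constructor
    · have h := hf1.comp (fun z : ℂ => a * z)
      have : a • f = (fun z : ℂ => a * z) ∘ f := by
        funext x; simp [Function.comp, smul_eq_mul]
      rwa [this]
    · exact hf2.mono fun x hx => by
        have h : a * f x ≠ 0 := hx
        exact fun h0 => h (by simp [h0])

/-- The I-norm on `C_c(G)`. -/
noncomputable def Inorm (f : G → ℂ) : ℝ :=
  max (⨆ u ∈ g.unitSpace, ∑ᶠ α ∈ {α : G | g.r α = u}, ‖f α‖)
      (⨆ u ∈ g.unitSpace, ∑ᶠ α ∈ {α : G | g.s α = u}, ‖f α‖)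

/-- A representation of the graded compact open bisections in a complex algebra. -/
structure IsRep {Γ : Type*} {B : Type*} [Ring B] [Algebra ℂ B]
    (c : G → Γ) (t : Set G → B) : Prop where
  map_empty : t ∅ = 0
  map_mul : ∀ U V, U ∈ g.Bco c → V ∈ g.Bco c → t U * t V = t (g.setMul U V)
  map_union : ∀ n U V, U ∈ g.BcoGr c n → V ∈ g.BcoGr c n → Disjoint U V →
    g.IsBisection (U ∪ V) → t U + t V = t (U ∪ V)

end EtaleGroupoid


/-- If `α` is the unique arrow from `s(α)` to `r(α)` and `V` is a precompact open
neighbourhood of `α`, then there are neighbourhoods `X` of `r(α)` and `Y` of `s(α)`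
in the unit space such that `XVY` is a precompact open bisection. -/
theorem exists_bisection_neighbourhood {G : Type*} [TopologicalSpace G] [T2Space G]
    [LocallyCompactSpace G] (g : EtaleGroupoid G) (hs : g.SourceEtale)
    (α : G) (hiso : ∀ γ : G, g.r γ = g.r α → g.s γ = g.s α → γ = α)
    (V : Set G) (hVo : IsOpen V) (hVα : α ∈ V) (hVc : IsCompact (closure V)) :
    ∃ X Y : Set G, IsOpen X ∧ g.r α ∈ X ∧ X ⊆ g.unitSpace ∧
      IsOpen Y ∧ g.s α ∈ Y ∧ Y ⊆ g.unitSpace ∧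
      IsOpen (g.r ⁻¹' X ∩ V ∩ g.s ⁻¹' Y) ∧
      IsCompact (closure (g.r ⁻¹' X ∩ V ∩ g.s ⁻¹' Y)) ∧
      g.IsBisection (g.r ⁻¹' X ∩ V ∩ g.s ⁻¹' Y) := by
  classical
  -- every source value is in the unit space (range of r)
  have hrange : ∀ b : G, g.s b ∈ g.unitSpace := fun b => ⟨g.inv b, g.r_inv b⟩
  -- the unit space is open
  have hUnitOpen : IsOpen g.unitSpace := by
    rw [isOpen_iff_forall_mem_open]
    rintro x ⟨a, rfl⟩
    obtain ⟨U, hUo, haU, _, himg⟩ := hs (g.inv a)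
    refine ⟨g.s '' U, ?_, himg U subset_rfl hUo, ⟨g.inv a, haU, g.s_inv a⟩⟩
    rintro _ ⟨b, -, rfl⟩
    exact hrange b
  -- neighbourhood where s is injective
  obtain ⟨U₁, hU₁o, hαU₁, hsinj, -⟩ := hs α
  -- neighbourhood where r is injective
  obtain ⟨U₂, hU₂o, hαU₂, hsinj₂, -⟩ := hs (g.inv α)
  set W : Set G := g.inv ⁻¹' U₂ with hW
  have hWo : IsOpen W := hU₂o.preimage g.continuous_inv
  have hαW : α ∈ W := hαU₂
  have hrinjW : Set.InjOn g.r W := by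
    intro a ha b hb hab
    have h1 : g.s (g.inv a) = g.s (g.inv b) := by
      rw [g.s_inv, g.s_inv, hab]
    have h2 : g.inv a = g.inv b := hsinj₂ ha hb h1
    have := congrArg g.inv h2
    rwa [g.inv_inv, g.inv_inv] at this
  set U : Set G := U₁ ∩ W ∩ V with hU
  have hUo : IsOpen U := (hU₁o.inter hWo).inter hVo
  have hαU : α ∈ U := ⟨⟨hαU₁, hαW⟩, hVα⟩
  set K : Set G := closure V ∩ Uᶜ with hK
  have hKc : IsCompact K := hVc.inter_right hUo.isClosed_compl
  set f : G → G × G := fun γ => (g.r γ, g.s γ) with hf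
  have hfc : Continuous f := g.continuous_r.prodMk g.continuous_s
  have hfKc : IsCompact (f '' K) := hKc.image hfc
  have hfKcl : IsClosed (f '' K) := hfKc.isClosed
  have hnot : (g.r α, g.s α) ∈ (f '' K)ᶜ := by
    rintro ⟨γ, hγK, heq⟩
    have h1 : g.r γ = g.r α := congrArg Prod.fst heq
    have h2 : g.s γ = g.s α := congrArg Prod.snd heq
    have : γ = α := hiso γ h1 h2
    exact hγK.2 (this ▸ hαU)
  obtain ⟨X', Y', hX'o, hY'o, hrαX', hsαY', hXY⟩ :=
    (isOpen_prod_iff.mp hfKcl.isOpen_compl) _ _ hnot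
  set X : Set G := X' ∩ g.unitSpace with hXdef
  set Y : Set G := Y' ∩ g.unitSpace with hYdef
  set Z : Set G := g.r ⁻¹' X ∩ V ∩ g.s ⁻¹' Y with hZ
  have hsub : Z ⊆ U := by
    rintro γ ⟨⟨hγX, hγV⟩, hγY⟩
    by_contra h
    have hγK : γ ∈ K := ⟨subset_closure hγV, h⟩
    have : f γ ∈ X' ×ˢ Y' := ⟨hγX.1, hγY.1⟩
    exact hXY this ⟨γ, hγK, rfl⟩
  have hXo : IsOpen X := hX'o.inter hUnitOpen
  have hYo : IsOpen Y := hY'o.inter hUnitOpen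
  refine ⟨X, Y, hXo, ⟨hrαX', ⟨α, rfl⟩⟩, Set.inter_subset_right,
    hYo, ⟨hsαY', hrange α⟩, Set.inter_subset_right, ?_, ?_, ?_, ?_⟩
  · exact ((hXo.preimage g.continuous_r).inter hVo).inter (hYo.preimage g.continuous_s)
  · exact hVc.of_isClosed_subset isClosed_closure
      (closure_mono fun γ hγ => hγ.1.2)
  · exact hrinjW.mono fun γ hγ => (hsub hγ).1.2
  · exact hsinj.mono fun γ hγ => (hsub hγ).1.1
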